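/- Let T be a finite type, R : T → ℝ a function taking nonnegative values, and ρ : ℝ^d → (T → ℝ) such that for every θ ∈ ℝ^d, ρ_θ is a probability mass function on T (ρ_θ(τ) ≥ 0 for all τ and Σ_{τ∈T} ρ_θ(τ) = 1), and for every τ ∈ T the map θ ↦ ρ_θ(τ) is differentiable. Let w : [0,1] → [0,1] be differentiable with w(0) = 0. Define S_θ(z) := Σ_{τ ∈ T : R(τ) > z} ρ_θ(τ) and J(θ) := ∫_0^{+∞} w(S_θ(z)) dz. Then J is differentiable and, for every θ ∈ ℝ^d, ∇J(θ) = Σ_{τ ∈ T} φ_θ(R(τ)) · ∇_θ ρ_θ(τ), where φ_θ(t) := ∫_0^t w'(S_θ(z)) dz. -/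

import Mathlib

open MeasureTheory


lemma aux_piece {h : ℝ → ℝ} {a b : ℝ} (hab : a < b)
    (hc : ∀ z ∈ Set.Ico a b, h z = h a) :
    IntervalIntegrable h volume a b ∧ ∫ z in a..b, h z = (b - a) * h a := by
  have hae : h =ᵐ[volume.restrict (Set.Ioc a b)] fun _ => h a := by
    have hb : ∀ᵐ z ∂(volume.restrict (Set.Ioc a b)), z ≠ b := by
      refine ae_restrict_of_ae ?_
      rw [ae_iff]
      have : {z : ℝ | ¬ z ≠ b} = {b} := by ext z; simp
      rw [this]; exact Real.volume_singleton
    have hmem : ∀ᵐ z ∂(volume.restrict (Set.Ioc a b)), z ∈ Set.Ioc a b := ae_restrict_mem measurableSet_Ioc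
    filter_upwards [hb, hmem] with z hzb hz
    exact hc z ⟨hz.1.le, lt_of_le_of_ne hz.2 hzb⟩
  have hint : IntegrableOn h (Set.Ioc a b) volume := by
    refine Integrable.congr ((integrableOn_const_iff (C := h a) enorm_ne_top).mpr ?_) hae.symm
    right; rw [Real.volume_Ioc]; exact ENNReal.ofReal_lt_top
  refine ⟨?_, ?_⟩
  · rw [intervalIntegrable_iff_integrableOn_Ioc_of_le hab.le]; exact hint
  · rw [intervalIntegral.integral_of_le hab.le, integral_congr_ae hae, setIntegral_const,
      Real.volume_real_Ioc_of_le hab.le, smul_eq_mul]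

lemma aux_gap : ∀ {l : List ℝ}, l.Pairwise (· < ·) →
    ∀ p ∈ l.zip l.tail, p.1 < p.2 ∧ ∀ v ∈ l, v ≤ p.1 ∨ p.2 ≤ v := by
  intro l
  induction l with
  | nil => intro _ p hp; simp at hp
  | cons x t ih =>
    intro hs p hp
    cases t with
    | nil => simp at hp
    | cons y t' =>
      rw [List.pairwise_cons] at hs
      obtain ⟨hx, hs'⟩ := hs
      simp only [List.tail_cons, List.zip_cons_cons, List.mem_cons] at hp
      rcases hp with rfl | hp
      · refine ⟨hx y (by simp), ?_⟩
        intro v hv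
        rcases List.mem_cons.1 hv with rfl | hv
        · exact Or.inl le_rfl
        · rcases List.mem_cons.1 hv with rfl | hv
          · exact Or.inr le_rfl
          · exact Or.inr ((List.pairwise_cons.1 hs').1 v hv).le
      · obtain ⟨h1, h2⟩ := ih hs' p hp
        refine ⟨h1, ?_⟩
        intro v hv
        rcases List.mem_cons.1 hv with rfl | hv
        · left
          exact (hx p.1 (List.of_mem_zip hp).1).le
        · exact h2 v hv


lemma aux_L2 : ∀ (t : List ℝ) (x : ℝ), (x :: t).Pairwise (· < ·) →
    ∀ (h : ℝ → ℝ), (∀ p ∈ (x :: t).zip t, ∀ z ∈ Set.Ico p.1 p.2, h z = h p.1) →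
    ∀ c ∈ (x :: t), IntervalIntegrable h volume x c ∧
      ∫ z in x..c, h z = (((x :: t).zip t).map
        (fun p => if p.2 ≤ c then (p.2 - p.1) * h p.1 else 0)).sum := by
  intro t
  induction t with
  | nil =>
    intro x _ h _ c hc
    simp only [List.mem_singleton] at hc
    subst hc
    simp [IntervalIntegrable.refl]
  | cons y t' ih =>
    intro x hs h hconst c hc
    have hx := (List.pairwise_cons.1 hs).1
    have hs' := (List.pairwise_cons.1 hs).2
    have hxy : x < y := hx y (by simp)
    have hpiece := aux_piece hxy (hconst (x, y) (by simp) )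
    rcases List.mem_cons.1 hc with rfl | hc
    · refine ⟨IntervalIntegrable.refl, ?_⟩
      rw [intervalIntegral.integral_same]
      symm
      apply List.sum_eq_zero
      intro e he
      obtain ⟨p, hp, rfl⟩ := List.mem_map.1 he
      have h2 : p.2 ∈ y :: t' := (List.of_mem_zip hp).2
      have : c < p.2 := hx p.2 h2
      rw [if_neg (not_le.2 this)]
    · have hyc : y ≤ c := by
        rcases List.mem_cons.1 hc with rfl | hc
        · exact le_rfl
        · exact ((List.pairwise_cons.1 hs').1 c hc).le
      have ihc := ih y hs' h
        (fun p hp => hconst p (by simp only [List.zip_cons_cons]; exact List.mem_cons_of_mem _ hp)) c hc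
      refine ⟨hpiece.1.trans ihc.1, ?_⟩
      rw [← intervalIntegral.integral_add_adjacent_intervals hpiece.1 ihc.1]
      simp only [List.zip_cons_cons, List.map_cons, List.sum_cons, if_pos hyc]
      rw [hpiece.2, ihc.2]

lemma aux_hasFDerivAt_list_sum {E : Type*} [NormedAddCommGroup E] [NormedSpace ℝ E]
    {ι : Type*} (L : List ι) (f : ι → E → ℝ) (f' : ι → E →L[ℝ] ℝ) {x : E}
    (h : ∀ i ∈ L, HasFDerivAt (f i) (f' i) x) :
    HasFDerivAt (fun y => (L.map (fun i => f i y)).sum) (L.map f').sum x := by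
  induction L with
  | nil => simpa using hasFDerivAt_const (0 : ℝ) x
  | cons a t ih =>
    simp only [List.map_cons, List.sum_cons]
    exact (h a (by simp)).add (ih (fun i hi => h i (List.mem_cons_of_mem _ hi)))

lemma aux_list_sum_smul {M : Type*} [AddCommMonoid M] [Module ℝ M]
    {ι : Type*} (L : List ι) (f : ι → ℝ) (v : M) :
    (L.map f).sum • v = (L.map (fun i => f i • v)).sum := by
  induction L with
  | nil => simp
  | cons a t ih => simp [add_smul, ih]

lemma aux_sum_comm {M : Type*} [AddCommMonoid M] {ι κ : Type*} (s : Finset κ)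
    (L : List ι) (f : κ → ι → M) :
    ∑ k ∈ s, (L.map (f k)).sum = (L.map (fun i => ∑ k ∈ s, f k i)).sum := by
  induction L with
  | nil => simp
  | cons a t ih => simp [Finset.sum_add_distrib, ih]

noncomputable def auxS {T : Type*} [Fintype T] {d : ℕ} (R : T → ℝ)
    (ρ : EuclideanSpace ℝ (Fin d) → T → ℝ) (θ : EuclideanSpace ℝ (Fin d)) (z : ℝ) : ℝ :=
  ∑ τ, if z < R τ then ρ θ τ else 0






/-- CPT policy gradient theorem on a finite trajectory space (gains term):
with a finite type `T` of trajectories, nonnegative returns `R`, a differentiably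
parametrized probability mass function `ρ θ` on `T`, a differentiable distortion
`w : [0,1] → [0,1]` with `w(0) = 0`, the CPT objective
`J(θ) = ∫_0^∞ w(Σ_{R(τ) > z} ρ_θ(τ)) dz` is differentiable with gradient
`∇J(θ) = Σ_τ φ_θ(R(τ)) · ∇_θ ρ_θ(τ)` where `φ_θ(t) = ∫_0^t w'(S_θ(z)) dz`. -/
theorem stmt_12 {T : Type*} [Fintype T] {d : ℕ}
    (R : T → ℝ) (hR : ∀ τ, 0 ≤ R τ)
    (ρ : EuclideanSpace ℝ (Fin d) → T → ℝ)
    (hρ_nonneg : ∀ θ τ, 0 ≤ ρ θ τ)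
    (hρ_sum : ∀ θ, ∑ τ, ρ θ τ = 1)
    (hρ_diff : ∀ τ, Differentiable ℝ (fun θ => ρ θ τ))
    (w : ℝ → ℝ) (hw_diff : Differentiable ℝ w) (hw0 : w 0 = 0)
    (hw_maps : Set.MapsTo w (Set.Icc 0 1) (Set.Icc 0 1)) :
    Differentiable ℝ
        (fun θ => ∫ z in Set.Ioi (0:ℝ), w (∑ τ, if z < R τ then ρ θ τ else 0)) ∧
      ∀ θ : EuclideanSpace ℝ (Fin d),
        gradient (fun θ' => ∫ z in Set.Ioi (0:ℝ),
            w (∑ τ, if z < R τ then ρ θ' τ else 0)) θ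
          = ∑ τ, (∫ z in (0:ℝ)..(R τ),
              deriv w (∑ τ', if z < R τ' then ρ θ τ' else 0))
                • gradient (fun θ' => ρ θ' τ) θ := by
  classical
  show Differentiable ℝ (fun θ => ∫ z in Set.Ioi (0:ℝ), w (auxS R ρ θ z)) ∧
      ∀ θ : EuclideanSpace ℝ (Fin d),
        gradient (fun θ' => ∫ z in Set.Ioi (0:ℝ), w (auxS R ρ θ' z)) θ
          = ∑ τ, (∫ z in (0:ℝ)..(R τ), deriv w (auxS R ρ θ z))
                • gradient (fun θ' => ρ θ' τ) θ
  -- the grid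
  set V : Finset ℝ := insert 0 (Finset.image R Finset.univ) with hVdef
  have h0V : (0:ℝ) ∈ V := Finset.mem_insert_self _ _
  have hRV : ∀ τ, R τ ∈ V :=
    fun τ => Finset.mem_insert_of_mem (Finset.mem_image_of_mem _ (Finset.mem_univ τ))
  have hVnn : ∀ v ∈ V, 0 ≤ v := by
    intro v hv
    rcases Finset.mem_insert.1 hv with rfl | hv
    · exact le_rfl
    · obtain ⟨τ, _, rfl⟩ := Finset.mem_image.1 hv; exact hR τ
  obtain ⟨t, ht⟩ : ∃ t : List ℝ, V.sort (· ≤ ·) = 0 :: t := by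
    cases hl' : V.sort (· ≤ ·) with
    | nil =>
      exfalso
      have := (Finset.mem_sort (α := ℝ) (· ≤ ·)).2 h0V
      rw [hl'] at this; simp at this
    | cons a t =>
      have hal : a ∈ V.sort (· ≤ ·) := by rw [hl']; simp
      have ha0 : 0 ≤ a := hVnn a ((Finset.mem_sort (α := ℝ) (· ≤ ·)).1 hal)
      have h0m : (0:ℝ) ∈ a :: t := by
        rw [← hl']; exact (Finset.mem_sort (α := ℝ) (· ≤ ·)).2 h0V
      rcases List.mem_cons.1 h0m with h | h
      · exact ⟨t, by rw [← h]⟩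
      · exfalso
        have hsort : (a :: t).Pairwise (· < ·) := by rw [← hl']; exact (Finset.sortedLT_sort V).pairwise
        have := (List.pairwise_cons.1 hsort).1 0 h
        linarith
  have hl : (0 :: t).Pairwise (· < ·) := by rw [← ht]; exact (Finset.sortedLT_sort V).pairwise
  have hmeml : ∀ x : ℝ, x ∈ 0 :: t ↔ x ∈ V := by
    intro x; rw [← ht]; exact Finset.mem_sort _
  have hVne : V.Nonempty := ⟨0, h0V⟩
  set M : ℝ := V.max' hVne with hMdef
  have hMmax : ∀ v ∈ V, v ≤ M := fun v hv => V.le_max' v hv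
  have hM0 : 0 ≤ M := hMmax 0 h0V
  set P : List (ℝ × ℝ) := (0 :: t).zip t with hPdef
  -- step-function integral formula
  have key : ∀ (θ : EuclideanSpace ℝ (Fin d)) (u : ℝ → ℝ) (c : ℝ), c ∈ V →
      IntervalIntegrable (fun z => u (auxS R ρ θ z)) volume 0 c ∧
      ∫ z in (0:ℝ)..c, u (auxS R ρ θ z)
        = (P.map (fun p => if p.2 ≤ c then (p.2 - p.1) * u (auxS R ρ θ p.1) else 0)).sum := by
    intro θ u c hc
    have hconst : ∀ p ∈ (0 :: t).zip t, ∀ z ∈ Set.Ico p.1 p.2,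
        u (auxS R ρ θ z) = u (auxS R ρ θ p.1) := by
      intro p hp z hz
      congr 1
      unfold auxS
      refine Finset.sum_congr rfl fun τ _ => ?_
      obtain ⟨hplt, hgap⟩ := aux_gap hl p hp
      rcases hgap (R τ) ((hmeml _).2 (hRV τ)) with hle | hge
      · rw [if_neg (by linarith [hz.1]), if_neg (not_lt.2 hle)]
      · rw [if_pos (lt_of_lt_of_le hz.2 hge), if_pos (lt_of_lt_of_le hplt hge)]
    exact aux_L2 t 0 hl _ hconst c ((hmeml c).2 hc)
  -- φ formula
  have hphi : ∀ (θ : EuclideanSpace ℝ (Fin d)) (τ : T),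
      ∫ z in (0:ℝ)..(R τ), deriv w (auxS R ρ θ z)
        = (P.map (fun p => if p.2 ≤ R τ then (p.2 - p.1) * deriv w (auxS R ρ θ p.1) else 0)).sum :=
    fun θ τ => (key θ (deriv w) (R τ) (hRV τ)).2
  -- vanishing beyond M
  have hSz : ∀ (θ : EuclideanSpace ℝ (Fin d)) (z : ℝ), M < z → auxS R ρ θ z = 0 := by
    intro θ z hz
    unfold auxS
    refine Finset.sum_eq_zero fun τ _ => ?_
    rw [if_neg (not_lt.2 (le_of_lt (lt_of_le_of_lt (hMmax _ (hRV τ)) hz)))]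
  -- J as a finite sum
  have hJint : ∀ θ : EuclideanSpace ℝ (Fin d),
      ∫ z in Set.Ioi (0:ℝ), w (auxS R ρ θ z) = ∫ z in (0:ℝ)..M, w (auxS R ρ θ z) := by
    intro θ
    have hMV : M ∈ V := V.max'_mem hVne
    have hint : IntegrableOn (fun z => w (auxS R ρ θ z)) (Set.Ioc 0 M) volume := by
      have := (key θ w M hMV).1
      rwa [intervalIntegrable_iff_integrableOn_Ioc_of_le hM0] at this
    have hzero : Set.EqOn (fun z => w (auxS R ρ θ z)) 0 (Set.Ioi M) := by
      intro z hz
      simp only [Pi.zero_apply]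
      rw [hSz θ z hz, hw0]
    have hint2 : IntegrableOn (fun z => w (auxS R ρ θ z)) (Set.Ioi M) volume :=
      (integrableOn_zero).congr_fun hzero.symm measurableSet_Ioi
    have hsplit : Set.Ioi (0:ℝ) = Set.Ioc 0 M ∪ Set.Ioi M := (Set.Ioc_union_Ioi_eq_Ioi hM0).symm
    rw [hsplit, setIntegral_union (Set.Ioc_disjoint_Ioi le_rfl) measurableSet_Ioi hint hint2,
      setIntegral_congr_fun measurableSet_Ioi hzero,
      intervalIntegral.integral_of_le hM0]
    simp
  have hJeq : (fun θ => ∫ z in Set.Ioi (0:ℝ), w (auxS R ρ θ z))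
      = fun θ => (P.map (fun p => (p.2 - p.1) * w (auxS R ρ θ p.1))).sum := by
    funext θ
    rw [hJint θ, (key θ w M (V.max'_mem hVne)).2]
    refine congrArg List.sum (List.map_congr_left fun p hp => ?_)
    have hp2 : p.2 ∈ 0 :: t := List.mem_cons_of_mem _ (List.of_mem_zip hp).2
    rw [if_pos (hMmax p.2 ((hmeml _).1 hp2))]
  -- derivative of S in θ
  have hD1 : ∀ (a : ℝ) (θ : EuclideanSpace ℝ (Fin d)),
      HasFDerivAt (fun θ' => auxS R ρ θ' a)
        (∑ τ, if a < R τ then fderiv ℝ (fun θ' => ρ θ' τ) θ else 0) θ := by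
    intro a θ
    unfold auxS
    refine HasFDerivAt.fun_sum fun τ _ => ?_
    by_cases hma : a < R τ
    · simp only [if_pos hma]
      exact (hρ_diff τ θ).hasFDerivAt
    · simp only [if_neg hma]
      exact hasFDerivAt_const 0 θ
  -- derivative of J
  have hJder : ∀ θ : EuclideanSpace ℝ (Fin d),
      HasFDerivAt (fun θ' => (P.map (fun p => (p.2 - p.1) * w (auxS R ρ θ' p.1))).sum)
        ((P.map (fun p => ((p.2 - p.1) * deriv w (auxS R ρ θ p.1))
          • (∑ τ, if p.1 < R τ then fderiv ℝ (fun θ' => ρ θ' τ) θ else 0))).sum) θ := by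
    intro θ
    refine aux_hasFDerivAt_list_sum P (fun p θ' => (p.2 - p.1) * w (auxS R ρ θ' p.1)) _
      (fun p _ => ?_)
    have hg := hD1 p.1 θ
    have hw' : HasDerivAt w (deriv w (auxS R ρ θ p.1)) (auxS R ρ θ p.1) :=
      (hw_diff _).hasDerivAt
    have := (hw'.comp_hasFDerivAt θ hg).const_mul (p.2 - p.1)
    simpa [smul_smul] using this
  constructor
  · rw [hJeq]
    exact fun θ => (hJder θ).differentiableAt
  · intro θ
    rw [hJeq]
    unfold gradient
    rw [(hJder θ).fderiv]
    have hcond : ∀ p ∈ P, ∀ τ : T, (p.2 ≤ R τ ↔ p.1 < R τ) := by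
      intro p hp τ
      obtain ⟨hplt, hgap⟩ := aux_gap hl p hp
      constructor
      · intro h; exact lt_of_lt_of_le hplt h
      · intro h
        rcases hgap (R τ) ((hmeml _).2 (hRV τ)) with h' | h'
        · linarith
        · exact h'
    have hDeq : (P.map (fun p => ((p.2 - p.1) * deriv w (auxS R ρ θ p.1))
          • (∑ τ, if p.1 < R τ then fderiv ℝ (fun θ' => ρ θ' τ) θ else 0))).sum
        = ∑ τ, (∫ z in (0:ℝ)..(R τ), deriv w (auxS R ρ θ z))
            • fderiv ℝ (fun θ' => ρ θ' τ) θ := by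
      symm
      calc ∑ τ, (∫ z in (0:ℝ)..(R τ), deriv w (auxS R ρ θ z))
            • fderiv ℝ (fun θ' => ρ θ' τ) θ
          = ∑ τ, (P.map (fun p => if p.2 ≤ R τ
              then ((p.2 - p.1) * deriv w (auxS R ρ θ p.1)) • fderiv ℝ (fun θ' => ρ θ' τ) θ
              else 0)).sum := by
            refine Finset.sum_congr rfl fun τ _ => ?_
            rw [hphi θ τ, aux_list_sum_smul]
            refine congrArg List.sum (List.map_congr_left fun p hp => ?_)
            split_ifs <;> simp
        _ = (P.map (fun p => ∑ τ, if p.2 ≤ R τ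
              then ((p.2 - p.1) * deriv w (auxS R ρ θ p.1)) • fderiv ℝ (fun θ' => ρ θ' τ) θ
              else 0)).sum := aux_sum_comm _ _ _
        _ = (P.map (fun p => ((p.2 - p.1) * deriv w (auxS R ρ θ p.1))
              • (∑ τ, if p.1 < R τ then fderiv ℝ (fun θ' => ρ θ' τ) θ else 0))).sum := by
            refine congrArg List.sum (List.map_congr_left fun p hp => ?_)
            rw [Finset.smul_sum]
            refine Finset.sum_congr rfl fun τ _ => ?_
            by_cases h : p.1 < R τ
            · rw [if_pos ((hcond p hp τ).2 h), if_pos h]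
            · rw [if_neg (fun h' => h ((hcond p hp τ).1 h')), if_neg h, smul_zero]
    rw [hDeq, map_sum]
    refine Finset.sum_congr rfl fun τ _ => ?_
    exact (InnerProductSpace.toDual ℝ (EuclideanSpace ℝ (Fin d))).symm.map_smul _ _
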